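/- Let F be a finite-dimensional real inner product space and L : F → F a symmetric positive semidefinite linear endomorphism. Let λ ≥ 0 and suppose v ∈ F lies in the sum of the eigenspaces of L corresponding to eigenvalues at most λ. Then for every w ∈ F: √⟨w, Lw⟩ ≥ √⟨v, Lv⟩ − √λ · ‖w − v‖. -/

import Mathlib

open scoped RealInnerProductSpace

theorem stmt_16 {F : Type*} [NormedAddCommGroup F] [InnerProductSpace ℝ F]
    [FiniteDimensional ℝ F]
    (L : F →ₗ[ℝ] F) (hsym : ∀ x y : F, ⟪L x, y⟫ = ⟪x, L y⟫)
    (hpsd : ∀ x : F, 0 ≤ ⟪x, L x⟫) (lam : ℝ) (hlam : 0 ≤ lam)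
    (v : F) (hv : v ∈ ⨆ (μ : ℝ) (_ : μ ≤ lam), Module.End.eigenspace L μ) :
    ∀ w : F, Real.sqrt ⟪v, L v⟫ - Real.sqrt lam * ‖w - v‖ ≤ Real.sqrt ⟪w, L w⟫ := by
  intro w
  have hSym : L.IsSymmetric := hsym
  set n := Module.finrank ℝ F with hn
  set b : OrthonormalBasis (Fin n) ℝ F := hSym.eigenvectorBasis rfl with hbdef
  set μ : Fin n → ℝ := hSym.eigenvalues rfl with hμ
  have hLb : ∀ i, L (b i) = μ i • b i := fun i => hSym.apply_eigenvectorBasis rfl i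
  have hbLx : ∀ (i) (x : F), ⟪b i, L x⟫ = μ i * ⟪b i, x⟫ := by
    intro i x
    rw [← hsym, hLb i, real_inner_smul_left]
  -- q x = ∑ μ i * (repr x i)^2
  have hq : ∀ x : F, ⟪x, L x⟫ = ∑ i, μ i * (b.repr x i) ^ 2 := by
    intro x
    rw [← b.sum_inner_mul_inner x (L x)]
    refine Finset.sum_congr rfl fun i _ => ?_
    rw [hbLx i x, b.repr_apply_apply, real_inner_comm x (b i)]
    ring
  have hμ0 : ∀ i, 0 ≤ μ i := by
    intro i
    have := hpsd (b i)
    rw [hLb i, real_inner_smul_right, real_inner_self_eq_norm_sq, b.orthonormal.1 i] at this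
    simpa using this
  -- coordinates of v vanish on high eigenvalues
  have hv0 : ∀ i, lam < μ i → b.repr v i = 0 := by
    intro i hi
    rw [b.repr_apply_apply]
    refine Submodule.iSup_induction (motive := fun x => ⟪b i, x⟫ = 0) _ hv ?_ (inner_zero_right _) ?_
    · intro ν x hx
      rcases le_or_gt ν lam with hνl | hνl
      · rw [iSup_pos hνl] at hx
        have hx' : L x = ν • x := Module.End.mem_eigenspace_iff.mp hx
        have h1 : μ i * ⟪b i, x⟫ = ν * ⟪b i, x⟫ := by
          rw [← hbLx i x, hx', real_inner_smul_right]
        have h3 := sub_eq_zero.mpr h1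
        rw [← sub_mul] at h3
        have h2 : μ i - ν ≠ 0 := sub_ne_zero.mpr (ne_of_gt (lt_of_le_of_lt hνl hi))
        exact (mul_eq_zero.mp h3).resolve_left h2
      · rw [iSup_neg (not_le.mpr hνl)] at hx
        rw [Submodule.mem_bot] at hx
        simp [hx]
    · intro x y hx hy
      rw [inner_add_right, hx, hy, add_zero]
  -- abbreviations
  set a : Fin n → ℝ := fun i => b.repr w i with ha
  set c : Fin n → ℝ := fun i => b.repr v i with hc
  set p : Fin n → ℝ := fun i => if μ i ≤ lam then a i else 0 with hp
  have hc0 : ∀ i, ¬ μ i ≤ lam → c i = 0 := fun i hi => hv0 i (not_le.mp hi)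
  -- step 1 : ∑ μ p² ≤ q w
  have step1 : ∑ i, μ i * (p i) ^ 2 ≤ ⟪w, L w⟫ := by
    rw [hq w]
    refine Finset.sum_le_sum fun i _ => ?_
    by_cases h : μ i ≤ lam
    · simp [hp, h, ha]
    · simp only [hp, h, if_false]
      simpa using mul_nonneg (hμ0 i) (sq_nonneg _)
  -- step 3 : ∑ μ (c - p)² ≤ lam * ‖w - v‖²
  have hnorm : ‖w - v‖ ^ 2 = ∑ i, (a i - c i) ^ 2 := by
    have := b.repr.norm_map (w - v)
    rw [← this, EuclideanSpace.norm_eq, Real.sq_sqrt (by positivity)]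
    refine Finset.sum_congr rfl fun i _ => ?_
    rw [map_sub]
    simp [Real.norm_eq_abs, sq_abs, ha, hc]
  have step3 : ∑ i, μ i * (c i - p i) ^ 2 ≤ lam * ‖w - v‖ ^ 2 := by
    rw [hnorm, Finset.mul_sum]
    refine Finset.sum_le_sum fun i _ => ?_
    by_cases h : μ i ≤ lam
    · simp only [hp, h, if_true]
      have : (c i - a i) ^ 2 = (a i - c i) ^ 2 := by ring
      nlinarith [sq_nonneg (a i - c i)]
    · rw [hc0 i h]
      simp only [hp, h, if_false]
      have := sq_nonneg (a i - c i)
      nlinarith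
  -- step 2 : triangle inequality for weighted l2
  have step2 : Real.sqrt (∑ i, μ i * (c i) ^ 2) ≤
      Real.sqrt (∑ i, μ i * (p i) ^ 2) + Real.sqrt (∑ i, μ i * (c i - p i) ^ 2) := by
    set X : EuclideanSpace ℝ (Fin n) := WithLp.toLp 2 (fun i => Real.sqrt (μ i) * p i) with hX
    set Y : EuclideanSpace ℝ (Fin n) := WithLp.toLp 2 (fun i => Real.sqrt (μ i) * (c i - p i)) with hY
    have hXn : ‖X‖ = Real.sqrt (∑ i, μ i * (p i) ^ 2) := by
      rw [EuclideanSpace.norm_eq]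
      congr 1
      refine Finset.sum_congr rfl fun i _ => ?_
      rw [Real.norm_eq_abs, sq_abs, hX, mul_pow, Real.sq_sqrt (hμ0 i)]
    have hYn : ‖Y‖ = Real.sqrt (∑ i, μ i * (c i - p i) ^ 2) := by
      rw [EuclideanSpace.norm_eq]
      congr 1
      refine Finset.sum_congr rfl fun i _ => ?_
      rw [Real.norm_eq_abs, sq_abs, hY, mul_pow, Real.sq_sqrt (hμ0 i)]
    have hXYn : ‖X + Y‖ = Real.sqrt (∑ i, μ i * (c i) ^ 2) := by
      rw [EuclideanSpace.norm_eq]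
      congr 1
      refine Finset.sum_congr rfl fun i _ => ?_
      have : (X + Y) i = Real.sqrt (μ i) * c i := by
        simp [hX, hY]
        ring
      rw [Real.norm_eq_abs, this, sq_abs, mul_pow, Real.sq_sqrt (hμ0 i)]
    calc Real.sqrt (∑ i, μ i * (c i) ^ 2) = ‖X + Y‖ := hXYn.symm
      _ ≤ ‖X‖ + ‖Y‖ := norm_add_le X Y
      _ = _ := by rw [hXn, hYn]
  -- combine
  have hqv : ⟪v, L v⟫ = ∑ i, μ i * (c i) ^ 2 := hq v
  have h4 : Real.sqrt (∑ i, μ i * (c i - p i) ^ 2) ≤ Real.sqrt lam * ‖w - v‖ := by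
    have : Real.sqrt (lam * ‖w - v‖ ^ 2) = Real.sqrt lam * ‖w - v‖ := by
      rw [Real.sqrt_mul hlam, Real.sqrt_sq (norm_nonneg _)]
    rw [← this]
    exact Real.sqrt_le_sqrt step3
  have h5 : Real.sqrt (∑ i, μ i * (p i) ^ 2) ≤ Real.sqrt ⟪w, L w⟫ := Real.sqrt_le_sqrt step1
  rw [hqv]
  linarith [step2]
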